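/- Suppose f : Π^{n₁×n₁} × ⋯ × Π^{n_N×n_N} → L(U) satisfies f(tZ) = t f(Z) for all t > 0, and there are maps φ_k with values in L(U, ℂ^{n_k} ⊗ M) such that f(Z) + f(Λ)* = Σ_{k=1}^N φ_k(Λ)* ((Z_k + Λ_k*) ⊗ I_M) φ_k(Z) for all Z, Λ, and f(X) = f(X)* for all tuples X of positive definite matrices. Then for every tuple X of positive definite matrices and every t > 0, Σ_k [φ_k(tX) − φ_k(X)]* (X_k ⊗ I_M) [φ_k(tX) − φ_k(X)] = 0; consequently (since each X_k ⊗ I_M has positive definite real part) φ_k(tX) = φ_k(X) for all k. -/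

import Mathlib

set_option synthInstance.maxHeartbeats 1000000
open scoped Matrix ComplexOrder

/-- Completeness of the `L²` product of finitely many complete normed groups. -/
instance piLpCompleteSpace {ι : Type*} [Fintype ι] (X : ι → Type*)
    [∀ i, NormedAddCommGroup (X i)] [∀ i, CompleteSpace (X i)] :
    CompleteSpace (PiLp 2 X) := by
  have e : PiLp 2 X ≃ᵤ (∀ i, X i) :=
    { toEquiv := WithLp.equiv 2 _
      uniformContinuous_toFun := PiLp.uniformContinuous_ofLp 2 _
      uniformContinuous_invFun := PiLp.uniformContinuous_toLp 2 _ }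
  exact e.completeSpace_iff.mpr inferInstance

/-- The operator `Z ⊗ I_M` on `ℂ^m ⊗ M`, modelled as `PiLp 2 (fun _ : Fin m => M)`. -/
noncomputable def matOp {m : ℕ} {M : Type*} [NormedAddCommGroup M] [InnerProductSpace ℂ M]
    (Z : Matrix (Fin m) (Fin m) ℂ) :
    PiLp 2 (fun _ : Fin m => M) →L[ℂ] PiLp 2 (fun _ : Fin m => M) :=
  (((PiLp.continuousLinearEquiv 2 ℂ (fun _ : Fin m => M)).symm :
      (∀ _ : Fin m, M) →L[ℂ] PiLp 2 (fun _ : Fin m => M)).comp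
    (ContinuousLinearMap.pi fun i => ∑ j, Z i j • ContinuousLinearMap.proj j)).comp
    ((PiLp.continuousLinearEquiv 2 ℂ (fun _ : Fin m => M)) :
      PiLp 2 (fun _ : Fin m => M) →L[ℂ] (∀ _ : Fin m, M))

section AuxMatOp
set_option maxHeartbeats 1000000

variable {m : ℕ} {M : Type*} [NormedAddCommGroup M] [InnerProductSpace ℂ M]

lemma matOp_apply (Z : Matrix (Fin m) (Fin m) ℂ) (v : PiLp 2 (fun _ : Fin m => M)) (i : Fin m) :
    matOp Z v i = ∑ j, Z i j • v j := by
  simp [matOp]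

lemma matOp_add (Z W : Matrix (Fin m) (Fin m) ℂ) :
    matOp (Z + W) = (matOp Z : PiLp 2 (fun _ : Fin m => M) →L[ℂ] _) + matOp W := by
  ext v i
  simp [matOp_apply, Matrix.add_apply, add_smul, Finset.sum_add_distrib]

lemma matOp_smul (c : ℂ) (Z : Matrix (Fin m) (Fin m) ℂ) :
    matOp (c • Z) = c • (matOp Z : PiLp 2 (fun _ : Fin m => M) →L[ℂ] _) := by
  ext v i
  simp [matOp_apply, Finset.smul_sum, smul_smul]

lemma matOp_one : matOp (1 : Matrix (Fin m) (Fin m) ℂ)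
    = (ContinuousLinearMap.id ℂ (PiLp 2 (fun _ : Fin m => M))) := by
  ext v i
  simp [matOp_apply, Matrix.one_apply]

lemma matOp_mul (Z W : Matrix (Fin m) (Fin m) ℂ) :
    matOp (Z * W) = (matOp Z : PiLp 2 (fun _ : Fin m => M) →L[ℂ] _) ∘L matOp W := by
  ext v i
  simp only [ContinuousLinearMap.comp_apply, matOp_apply, Matrix.mul_apply,
    Finset.sum_smul, Finset.smul_sum, smul_smul]
  rw [Finset.sum_comm]

lemma posDef_real_smul {A : Matrix (Fin m) (Fin m) ℂ} (hA : A.PosDef) {t : ℝ} (ht : 0 < t) :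
    ((t : ℂ) • A).PosDef := by
  constructor
  · show ((t:ℂ) • A)ᴴ = _
    rw [Matrix.conjTranspose_smul, hA.1]
    congr 1
    simp [RCLike.star_def, Complex.conj_ofReal]
  · intro x hx
    have h := mul_pos (show (0:ℂ) < t by exact_mod_cast ht) (hA.2 hx)
    simpa [Finsupp.mul_sum, Matrix.smul_apply, mul_assoc, mul_left_comm] using h

section PSDSqrt
open scoped MatrixOrder

noncomputable def Matrix.PosSemidef.sqrt {A : Matrix (Fin m) (Fin m) ℂ} (_hA : A.PosSemidef) :
    Matrix (Fin m) (Fin m) ℂ := CFC.sqrt A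

lemma Matrix.PosSemidef.sqrt_mul_self {A : Matrix (Fin m) (Fin m) ℂ} (hA : A.PosSemidef) :
    hA.sqrt * hA.sqrt = A := CFC.sqrt_mul_sqrt_self A hA.nonneg

lemma Matrix.PosSemidef.posSemidef_sqrt {A : Matrix (Fin m) (Fin m) ℂ} (hA : A.PosSemidef) :
    hA.sqrt.PosSemidef := Matrix.nonneg_iff_posSemidef.mp (CFC.sqrt_nonneg A)

end PSDSqrt

variable [CompleteSpace M]

lemma matOp_adjoint (Z : Matrix (Fin m) (Fin m) ℂ) :
    ContinuousLinearMap.adjoint (matOp Z : PiLp 2 (fun _ : Fin m => M) →L[ℂ] _)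
      = matOp Zᴴ := by
  symm
  rw [ContinuousLinearMap.eq_adjoint_iff]
  intro x y
  simp only [PiLp.inner_apply, matOp_apply, inner_sum, sum_inner, inner_smul_left,
    inner_smul_right, Matrix.conjTranspose_apply]
  rw [Finset.sum_comm]
  simp [RCLike.star_def]

lemma matOp_posdef_inner {A : Matrix (Fin m) (Fin m) ℂ} (hA : A.PosDef)
    (v : PiLp 2 (fun _ : Fin m => M))
    (h : (inner ℂ ((matOp A) v) v : ℂ) = 0) : v = 0 := by
  set B := hA.posSemidef.sqrt with hB
  have hBB : B * B = A := hA.posSemidef.sqrt_mul_self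
  have hBH : Bᴴ = B := hA.posSemidef.posSemidef_sqrt.isHermitian
  have hkey : (inner ℂ ((matOp A) v) v : ℂ) = (‖(matOp B) v‖ : ℂ) ^ 2 := by
    rw [← hBB, matOp_mul, ContinuousLinearMap.comp_apply]
    have hsa : ContinuousLinearMap.adjoint (matOp B : PiLp 2 (fun _ : Fin m => M) →L[ℂ] _)
        = matOp B := by rw [matOp_adjoint, hBH]
    rw [show (matOp B) ((matOp B) v) = (ContinuousLinearMap.adjoint (matOp B)) ((matOp B) v)
        from by rw [hsa], ContinuousLinearMap.adjoint_inner_left]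
    exact inner_self_eq_norm_sq_to_K (𝕜 := ℂ) ((matOp B) v)
  rw [hkey] at h
  have h2 : (matOp B) v = 0 := by
    have := pow_eq_zero_iff (n := 2) (by norm_num) |>.mp (by exact_mod_cast h : (‖(matOp B) v‖:ℂ)^2 = 0)
    exact norm_eq_zero.mp (by exact_mod_cast this)
  have hdet : B.det ≠ 0 := by
    have : B.det * B.det = A.det := by rw [← Matrix.det_mul, hBB]
    intro h0
    rw [h0, mul_zero] at this
    exact hA.det_pos.ne' this.symm
  have hinv : B⁻¹ * B = 1 := Matrix.nonsing_inv_mul B (isUnit_iff_ne_zero.mpr hdet)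
  calc v = matOp (B⁻¹ * B) v := by rw [hinv, matOp_one]; rfl
    _ = matOp B⁻¹ ((matOp B) v) := by rw [matOp_mul]; rfl
    _ = 0 := by rw [h2, map_zero]


end AuxMatOp

set_option maxHeartbeats 1000000

/-- Suppose `f` on the product of matrix halfplanes satisfies `f(tZ) = t f(Z)` for
`t > 0`, the identity `f(Z) + f(Λ)* = Σₖ φₖ(Λ)* ((Zₖ + Λₖ*) ⊗ I_M) φₖ(Z)` holds for
all `Z, Λ`, and `f(X) = f(X)*` for tuples `X` of positive definite matrices. Then
for every such `X` and `t > 0`,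
`Σₖ [φₖ(tX) − φₖ(X)]* (Xₖ ⊗ I_M) [φₖ(tX) − φₖ(X)] = 0`, and consequently
`φₖ(tX) = φₖ(X)` for all `k`. -/
theorem phi_homogeneous_on_posdef
    {N : ℕ} (n : Fin N → ℕ) {U M : Type*}
    [NormedAddCommGroup U] [InnerProductSpace ℂ U] [CompleteSpace U]
    [NormedAddCommGroup M] [InnerProductSpace ℂ M] [CompleteSpace M]
    (f : (∀ k, Matrix (Fin (n k)) (Fin (n k)) ℂ) → (U →L[ℂ] U))
    (φ : ∀ k, (∀ k', Matrix (Fin (n k')) (Fin (n k')) ℂ) →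
      (U →L[ℂ] PiLp 2 (fun _ : Fin (n k) => M)))
    (hhomf : ∀ t : ℝ, 0 < t → ∀ Z : ∀ k, Matrix (Fin (n k)) (Fin (n k)) ℂ,
      (∀ k, ((Z k) + (Z k)ᴴ).PosDef) →
      f (fun k => (t : ℂ) • Z k) = (t : ℂ) • f Z)
    (hdec : ∀ Z Λ : ∀ k, Matrix (Fin (n k)) (Fin (n k)) ℂ,
      (∀ k, ((Z k) + (Z k)ᴴ).PosDef) → (∀ k, ((Λ k) + (Λ k)ᴴ).PosDef) →
      f Z + ContinuousLinearMap.adjoint (f Λ) =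
        ∑ k, (ContinuousLinearMap.adjoint (φ k Λ)) ∘L
          ((matOp ((Z k) + (Λ k)ᴴ)) ∘L (φ k Z)))
    (hsym : ∀ X : ∀ k, Matrix (Fin (n k)) (Fin (n k)) ℂ,
      (∀ k, (X k).PosDef) → ContinuousLinearMap.adjoint (f X) = f X) :
    ∀ X : ∀ k, Matrix (Fin (n k)) (Fin (n k)) ℂ, (∀ k, (X k).PosDef) →
      ∀ t : ℝ, 0 < t →
        (∑ k, (ContinuousLinearMap.adjoint
            (φ k (fun k' => (t : ℂ) • X k') - φ k X)) ∘L
          ((matOp (X k)) ∘L (φ k (fun k' => (t : ℂ) • X k') - φ k X)) = 0) ∧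
        ∀ k, φ k (fun k' => (t : ℂ) • X k') = φ k X := by
  intro X hX t ht
  have hcanc : ∀ (a : ℂ), a ≠ 0 → ∀ (S T : U →L[ℂ] U), a • S = a • T → S = T :=
    fun a ha S T h => smul_right_injective _ ha h
  set c : ℂ := (t : ℂ) with hc
  have hc0 : c ≠ 0 := by
    simp only [hc, ne_eq, Complex.ofReal_eq_zero]
    exact ht.ne'
  have hcstar : star c = c := by simp [hc, RCLike.star_def, Complex.conj_ofReal]
  have hH : ∀ k, (X k)ᴴ = X k := fun k => (hX k).1
  have hPX : ∀ k, ((X k) + (X k)ᴴ).PosDef := fun k => by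
    rw [hH k]; exact (hX k).add (hX k)
  have htX : ∀ k, (c • X k).PosDef := fun k => posDef_real_smul (hX k) ht
  have hPtX : ∀ k, ((c • X k) + (c • X k)ᴴ).PosDef := fun k => by
    rw [(htX k).1]; exact (htX k).add (htX k)
  set ψ : ∀ k, U →L[ℂ] PiLp 2 (fun _ : Fin (n k) => M) :=
    fun k => φ k (fun k' => c • X k') with hψ
  set χ : ∀ k, U →L[ℂ] PiLp 2 (fun _ : Fin (n k) => M) := fun k => φ k X with hχ
  have hftX : f (fun k' => c • X k') = c • f X := hhomf t ht X hPX
  have hadjX : ContinuousLinearMap.adjoint (f X) = f X := hsym X hX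
  have hadjtX : ContinuousLinearMap.adjoint (f (fun k' => c • X k')) = c • f X := by
    rw [hftX, LinearIsometryEquiv.map_smulₛₗ, hadjX]
    simp [RCLike.star_def, Complex.conj_ofReal, hc]
  have hadj2 : ContinuousLinearMap.adjoint (c • f X) = c • f X := by
    rw [LinearIsometryEquiv.map_smulₛₗ, hadjX]
    simp [hc, RCLike.star_def, Complex.conj_ofReal]
  -- the four identities
  have E1 : f X = ∑ k, ContinuousLinearMap.adjoint (χ k) ∘L (matOp (X k) ∘L χ k) := by
    have h := hdec X X hPX hPX
    rw [hadjX] at h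
    have hs : ∀ k, ContinuousLinearMap.adjoint (χ k) ∘L (matOp (X k + (X k)ᴴ) ∘L χ k)
        = (ContinuousLinearMap.adjoint (χ k) ∘L (matOp (X k) ∘L χ k))
          + (ContinuousLinearMap.adjoint (χ k) ∘L (matOp (X k) ∘L χ k)) := by
      intro k
      rw [hH k, ← two_smul ℂ (X k), matOp_smul, ContinuousLinearMap.smul_comp,
        ContinuousLinearMap.comp_smul, two_smul]
    rw [Finset.sum_congr rfl (fun k _ => hs k), Finset.sum_add_distrib,
      ← two_smul ℂ (f X), ← two_smul ℂ (∑ k, _)] at h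
    exact hcanc 2 two_ne_zero _ _ h
  have E2 : f X = ∑ k, ContinuousLinearMap.adjoint (ψ k) ∘L (matOp (X k) ∘L ψ k) := by
    have h := hdec (fun k => c • X k) (fun k => c • X k) hPtX hPtX
    rw [hftX, hadj2] at h
    have hs : ∀ k, ContinuousLinearMap.adjoint (ψ k)
          ∘L (matOp ((c • X k) + (c • X k)ᴴ) ∘L ψ k)
        = (2 * c) • (ContinuousLinearMap.adjoint (ψ k) ∘L (matOp (X k) ∘L ψ k)) := by
      intro k
      rw [(htX k).1, ← two_smul ℂ (c • X k), smul_smul, matOp_smul,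
        ContinuousLinearMap.smul_comp, ContinuousLinearMap.comp_smul]
    rw [Finset.sum_congr rfl (fun k _ => hs k), ← Finset.smul_sum,
      ← two_smul ℂ (c • f X), smul_smul] at h
    exact hcanc (2 * c) (mul_ne_zero two_ne_zero hc0) _ _ h
  have E3 : f X = ∑ k, ContinuousLinearMap.adjoint (χ k) ∘L (matOp (X k) ∘L ψ k) := by
    have h := hdec (fun k => c • X k) X hPtX hPX
    rw [hftX, hadjX] at h
    have hs : ∀ k, ContinuousLinearMap.adjoint (χ k)
          ∘L (matOp ((c • X k) + (X k)ᴴ) ∘L ψ k)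
        = (c + 1) • (ContinuousLinearMap.adjoint (χ k) ∘L (matOp (X k) ∘L ψ k)) := by
      intro k
      have harg : (c • X k) + (X k)ᴴ = (c + 1) • X k := by
        rw [hH k, add_smul, one_smul]
      rw [harg, matOp_smul, ContinuousLinearMap.smul_comp, ContinuousLinearMap.comp_smul]
    have hL : c • f X + f X = (c + 1) • f X := by rw [add_smul, one_smul]
    rw [hL, Finset.sum_congr rfl (fun k _ => hs k), ← Finset.smul_sum] at h
    have hc1 : c + 1 ≠ 0 := by
      intro h0
      have : (c + 1).re = 0 := by rw [h0]; rfl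
      simp only [Complex.add_re, hc, Complex.ofReal_re, Complex.one_re] at this
      linarith
    exact hcanc (c + 1) hc1 _ _ h
  have E4 : f X = ∑ k, ContinuousLinearMap.adjoint (ψ k) ∘L (matOp (X k) ∘L χ k) := by
    have h := hdec X (fun k => c • X k) hPX hPtX
    rw [hadjtX] at h
    have hs : ∀ k, ContinuousLinearMap.adjoint (ψ k)
          ∘L (matOp ((X k) + (c • X k)ᴴ) ∘L χ k)
        = (1 + c) • (ContinuousLinearMap.adjoint (ψ k) ∘L (matOp (X k) ∘L χ k)) := by
      intro k
      have harg : (X k) + (c • X k)ᴴ = (1 + c) • X k := by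
        rw [Matrix.conjTranspose_smul, hcstar, hH k, add_smul, one_smul]
      rw [harg, matOp_smul, ContinuousLinearMap.smul_comp, ContinuousLinearMap.comp_smul]
    have hL : f X + c • f X = (1 + c) • f X := by rw [add_smul, one_smul]
    rw [hL, Finset.sum_congr rfl (fun k _ => hs k), ← Finset.smul_sum] at h
    have hc1 : (1 : ℂ) + c ≠ 0 := by
      intro h0
      have : ((1 : ℂ) + c).re = 0 := by rw [h0]; rfl
      simp only [Complex.add_re, hc, Complex.ofReal_re, Complex.one_re] at this
      linarith
    exact hcanc (1 + c) hc1 _ _ h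
  -- part 1
  have hzero : ∑ k, ContinuousLinearMap.adjoint (ψ k - χ k)
      ∘L (matOp (X k) ∘L (ψ k - χ k)) = 0 := by
    have hexp : ∀ k, ContinuousLinearMap.adjoint (ψ k - χ k)
          ∘L (matOp (X k) ∘L (ψ k - χ k))
        = ((ContinuousLinearMap.adjoint (ψ k) ∘L (matOp (X k) ∘L ψ k))
            + (ContinuousLinearMap.adjoint (χ k) ∘L (matOp (X k) ∘L χ k)))
          - ((ContinuousLinearMap.adjoint (χ k) ∘L (matOp (X k) ∘L ψ k))
            + (ContinuousLinearMap.adjoint (ψ k) ∘L (matOp (X k) ∘L χ k))) := by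
      intro k
      rw [map_sub]
      simp only [ContinuousLinearMap.sub_comp, ContinuousLinearMap.comp_sub]
      abel
    rw [Finset.sum_congr rfl (fun k _ => hexp k), Finset.sum_sub_distrib,
      Finset.sum_add_distrib, Finset.sum_add_distrib, ← E1, ← E2, ← E3, ← E4]
    abel
  refine ⟨hzero, fun k => ?_⟩
  -- part 2
  have hDzero : ∀ u : U, ∀ k, (ψ k - χ k) u = 0 := by
    intro u
    have h1 : ∑ k, (inner ℂ ((matOp (X k)) ((ψ k - χ k) u)) ((ψ k - χ k) u) : ℂ) = 0 := by
      have h := congrArg (fun T : U →L[ℂ] U => (inner ℂ (T u) u : ℂ)) hzero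
      simp only [ContinuousLinearMap.sum_apply, sum_inner, ContinuousLinearMap.zero_apply,
        inner_zero_left, ContinuousLinearMap.comp_apply,
        ContinuousLinearMap.adjoint_inner_left] at h
      exact h
    have h2 : ∑ k, (‖(matOp ((hX k).posSemidef.sqrt)) ((ψ k - χ k) u)‖ ^ 2 : ℝ) = 0 := by
      have hr : ∀ k, (inner ℂ ((matOp (X k)) ((ψ k - χ k) u)) ((ψ k - χ k) u) : ℂ)
          = ((‖(matOp ((hX k).posSemidef.sqrt)) ((ψ k - χ k) u)‖ ^ 2 : ℝ) : ℂ) := by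
        intro k
        set B := (hX k).posSemidef.sqrt with hB
        have hBB : B * B = X k := (hX k).posSemidef.sqrt_mul_self
        have hBH : Bᴴ = B := (hX k).posSemidef.posSemidef_sqrt.isHermitian
        set v := (ψ k - χ k) u with hv
        have hsa : ContinuousLinearMap.adjoint
            (matOp B : PiLp 2 (fun _ : Fin (n k) => M) →L[ℂ] _) = matOp B := by
          rw [matOp_adjoint, hBH]
        rw [← hBB, matOp_mul, ContinuousLinearMap.comp_apply,
          show (matOp B) ((matOp B) v) = (ContinuousLinearMap.adjoint (matOp B)) ((matOp B) v)
            from by rw [hsa], ContinuousLinearMap.adjoint_inner_left,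
          inner_self_eq_norm_sq_to_K (𝕜 := ℂ)]
        norm_cast
      rw [Finset.sum_congr rfl (fun k _ => hr k)] at h1
      exact_mod_cast h1
    intro k
    have h3 : (‖(matOp ((hX k).posSemidef.sqrt)) ((ψ k - χ k) u)‖ ^ 2 : ℝ) = 0 :=
      (Finset.sum_eq_zero_iff_of_nonneg (fun k _ => sq_nonneg _)).mp h2 k (Finset.mem_univ k)
    have h4 : (inner ℂ ((matOp (X k)) ((ψ k - χ k) u)) ((ψ k - χ k) u) : ℂ) = 0 := by
      have hr : ∀ k', (inner ℂ ((matOp (X k')) ((ψ k' - χ k') u)) ((ψ k' - χ k') u) : ℂ)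
          = ((‖(matOp ((hX k').posSemidef.sqrt)) ((ψ k' - χ k') u)‖ ^ 2 : ℝ) : ℂ) := by
        intro k'
        set B := (hX k').posSemidef.sqrt with hB
        have hBB : B * B = X k' := (hX k').posSemidef.sqrt_mul_self
        have hBH : Bᴴ = B := (hX k').posSemidef.posSemidef_sqrt.isHermitian
        set v := (ψ k' - χ k') u with hv
        have hsa : ContinuousLinearMap.adjoint
            (matOp B : PiLp 2 (fun _ : Fin (n k') => M) →L[ℂ] _) = matOp B := by
          rw [matOp_adjoint, hBH]
        rw [← hBB, matOp_mul, ContinuousLinearMap.comp_apply,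
          show (matOp B) ((matOp B) v) = (ContinuousLinearMap.adjoint (matOp B)) ((matOp B) v)
            from by rw [hsa], ContinuousLinearMap.adjoint_inner_left,
          inner_self_eq_norm_sq_to_K (𝕜 := ℂ)]
        norm_cast
      rw [hr k, h3]
      simp
    exact matOp_posdef_inner (hX k) _ h4
  have : ψ k - χ k = 0 := ContinuousLinearMap.ext fun u => hDzero u k
  have := sub_eq_zero.mp this
  exact this
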